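/- The van Albada limiter satisfies ψ(a,a) = a for all a ≠ 0, and |ψ(a,b)| ≤ ((1+√2)/2)·min(|a|,|b|) for all (a,b) with a² + b² ≠ 0. -/

import Mathlib

noncomputable def vanAlbada (a b : ℝ) : ℝ := (a ^ 2 * b + a * b ^ 2) / (a ^ 2 + b ^ 2)

lemma vanAlbada_key (a b : ℝ) : |b * (a + b)| ≤ (1 + Real.sqrt 2) / 2 * (a ^ 2 + b ^ 2) := by
  have hs : Real.sqrt 2 ^ 2 = 2 := Real.sq_sqrt (by norm_num)
  have hs1 : (1 : ℝ) ≤ Real.sqrt 2 := by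
    nlinarith [Real.sqrt_nonneg 2]
  rcases abs_cases (b * (a + b)) with ⟨h, _⟩ | ⟨h, _⟩ <;> rw [h] <;>
    nlinarith [sq_nonneg (b - (1 + Real.sqrt 2) * a), sq_nonneg (b + (1 + Real.sqrt 2) * a),
      Real.sqrt_nonneg 2]

theorem vanAlbada_diag_and_bound :
    (∀ a : ℝ, a ≠ 0 → vanAlbada a a = a) ∧
    (∀ a b : ℝ, a ^ 2 + b ^ 2 ≠ 0 →
      |vanAlbada a b| ≤ (1 + Real.sqrt 2) / 2 * min |a| |b|) := by
  constructor
  · intro a ha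
    have h : a ^ 2 + a ^ 2 ≠ 0 := by positivity
    rw [vanAlbada, div_eq_iff h]
    ring
  · intro a b h
    have hpos : 0 < a ^ 2 + b ^ 2 := lt_of_le_of_ne (by positivity) (Ne.symm h)
    rw [vanAlbada, abs_div, abs_of_pos hpos, div_le_iff₀ hpos]
    rcases le_total |a| |b| with hab | hab
    · rw [min_eq_left hab]
      calc |a ^ 2 * b + a * b ^ 2| = |a| * |b * (a + b)| := by
            rw [← abs_mul]; ring_nf
          _ ≤ |a| * ((1 + Real.sqrt 2) / 2 * (a ^ 2 + b ^ 2)) :=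
            mul_le_mul_of_nonneg_left (vanAlbada_key a b) (abs_nonneg a)
          _ = (1 + Real.sqrt 2) / 2 * |a| * (a ^ 2 + b ^ 2) := by ring
    · rw [min_eq_right hab]
      calc |a ^ 2 * b + a * b ^ 2| = |b| * |a * (b + a)| := by
            rw [← abs_mul]; ring_nf
          _ ≤ |b| * ((1 + Real.sqrt 2) / 2 * (b ^ 2 + a ^ 2)) :=
            mul_le_mul_of_nonneg_left (vanAlbada_key b a) (abs_nonneg b)
          _ = (1 + Real.sqrt 2) / 2 * |b| * (a ^ 2 + b ^ 2) := by ring
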